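/- There exists an irreducible almost lower triangular transition matrix L on ℕ that admits several non-proportional invariant measures: there exist π, π' : ℕ → ℝ with π a > 0 and π' a > 0 for all a, both invariant for L, such that π' is not a scalar multiple of π. -/

import Mathlib

/-- Irreducibility of a matrix on `ℕ`. -/
def MatIrreducible (M : ℕ → ℕ → ℝ) : Prop :=
  ∀ i j : ℕ, ∃ (n : ℕ) (x : ℕ → ℕ), 0 < n ∧ x 0 = i ∧ x n = j ∧
    ∀ k, k < n → 0 < M (x k) (x (k + 1))

/- Auxiliary construction: a skip-free-down chain `K` on ℕ with
`K n (n+2) = 1 - eP n`, `K n (n-1) = eP n` (n ≥ 1), `K 0 0 = eP 0 = 1/2`,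
an explicit positive harmonic function `hF`, and a positive invariant
measure `muF` defined recursively via cut (flow) equations.
The reversed matrix `LL a b = muF b * K b a / muF a` is almost lower
triangular, irreducible, and admits the two non-proportional invariant
measures `muF` and `muF * hF`. -/

noncomputable def eP : ℕ → ℝ
  | 0 => 1/2
  | 1 => 3/13
  | n+2 => 3/(2^(n+5) - 9)

noncomputable def muF : ℕ → ℝ
  | 0 => 1
  | 1 => 13/6
  | n+2 => ((1 - eP n) * muF n + (1 - eP (n+1)) * muF (n+1)) / eP (n+2)

noncomputable def hF : ℕ → ℝ := fun n =>
  if n = 0 then 7/4 else if n % 2 = 1 then (1/2)^n else 2 - (1/2)^n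

noncomputable def LL : ℕ → ℕ → ℝ := fun a b =>
  if b = a + 1 then muF (a+1) * eP (a+1) / muF a
  else if a = b + 2 then muF b * (1 - eP b) / muF a
  else if a = 0 ∧ b = 0 then 1/2 else 0

lemma two_pow_big (n : ℕ) : (32:ℝ) ≤ 2^(n+5) := by
  calc (32:ℝ) = 2^5 := by norm_num
  _ ≤ 2^(n+5) := by
      apply pow_le_pow_right₀ (by norm_num)
      omega

lemma eP_pos (n : ℕ) : 0 < eP n := by
  match n with
  | 0 => norm_num [eP]
  | 1 => norm_num [eP]
  | n+2 =>
    have := two_pow_big n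
    simp only [eP]
    apply div_pos (by norm_num)
    linarith

lemma eP_lt_one (n : ℕ) : eP n < 1 := by
  match n with
  | 0 => norm_num [eP]
  | 1 => norm_num [eP]
  | n+2 =>
    have := two_pow_big n
    simp only [eP]
    rw [div_lt_one (by linarith)]
    linarith

lemma muF_pos (n : ℕ) : 0 < muF n := by
  induction n using Nat.twoStepInduction with
  | zero => norm_num [muF]
  | one => norm_num [muF]
  | more n ih1 ih2 =>
    simp only [muF]
    apply div_pos _ (eP_pos (n+2))
    have h1 := eP_lt_one n
    have h2 := eP_lt_one (n+1)
    nlinarith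

lemma cutEq (n : ℕ) : eP (n+2) * muF (n+2)
    = (1 - eP n) * muF n + (1 - eP (n+1)) * muF (n+1) := by
  have h := (eP_pos (n+2)).ne'
  show eP (n+2) * (((1 - eP n) * muF n + (1 - eP (n+1)) * muF (n+1)) / eP (n+2)) = _
  field_simp

lemma hF_zero : hF 0 = 7/4 := by simp [hF]
lemma hF_odd (n : ℕ) (h : n % 2 = 1) : hF n = (1/2)^n := by
  have : n ≠ 0 := by omega
  simp [hF, this, h]
lemma hF_even (n : ℕ) (h0 : n ≠ 0) (h : n % 2 = 0) : hF n = 2 - (1/2)^n := by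
  simp [hF, h0, h]

lemma hF_pos (n : ℕ) : 0 < hF n := by
  rcases Nat.eq_zero_or_pos n with rfl | hn
  · norm_num [hF_zero]
  rcases Nat.even_or_odd n with he | ho
  · have h2 : n % 2 = 0 := Nat.even_iff.mp he
    rw [hF_even n (by omega) h2]
    have : ((1:ℝ)/2)^n ≤ 1 := by
      apply pow_le_one₀ <;> norm_num
    linarith
  · have h2 : n % 2 = 1 := Nat.odd_iff.mp ho
    rw [hF_odd n h2]
    positivity

lemma eP_succ3 (c : ℕ) : eP (c+3) = 3/(64 * 2^c - 9) := by
  show eP ((c+1)+2) = _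
  simp only [eP]
  congr 1
  rw [pow_add]
  ring

lemma one_le_two_pow (c : ℕ) : (1:ℝ) ≤ 2^c := by
  calc (1:ℝ) = 1^c := (one_pow c).symm
  _ ≤ 2^c := by
      apply pow_le_pow_left₀ <;> norm_num

lemma harm (c : ℕ) : eP (c+1) * hF c + (1 - eP (c+1)) * hF (c+3) = hF (c+1) := by
  match c with
  | 0 =>
    rw [hF_zero, hF_odd 3 (by norm_num), hF_odd 1 (by norm_num)]
    norm_num [eP]
  | 1 =>
    rw [hF_odd 1 (by norm_num), hF_even 4 (by norm_num) (by norm_num),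
      hF_even 2 (by norm_num) (by norm_num)]
    show eP (0+2) * _ + (1 - eP (0+2)) * _ = _
    simp only [eP]
    norm_num
  | c+2 =>
    have hs := one_le_two_pow c
    have hpow : ∀ m : ℕ, ((1:ℝ)/2)^(c+m) = 1/(2^c * 2^m) := by
      intro m
      rw [div_pow, one_pow, pow_add]
    have he : eP (c+3) = 3/(64 * 2^c - 9) := eP_succ3 c
    rcases Nat.even_or_odd c with hev | hod
    · have h2 : c % 2 = 0 := Nat.even_iff.mp hev
      rw [hF_even (c+2) (by omega) (by omega), hF_odd (c+5) (by omega),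
        hF_odd (c+3) (by omega), he, hpow 2, hpow 5, hpow 3]
      have hne : (64:ℝ) * 2^c - 9 ≠ 0 := by nlinarith
      have hne2 : (2:ℝ)^c ≠ 0 := by positivity
      field_simp
      ring
    · have h2 : c % 2 = 1 := Nat.odd_iff.mp hod
      rw [hF_odd (c+2) (by omega), hF_even (c+5) (by omega) (by omega),
        hF_even (c+3) (by omega) (by omega), he, hpow 2, hpow 5, hpow 3]
      have hne : (64:ℝ) * 2^c - 9 ≠ 0 := by nlinarith
      have hne2 : (2:ℝ)^c ≠ 0 := by positivity
      field_simp
      ring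

lemma LL_up (a : ℕ) : LL a (a+1) = muF (a+1) * eP (a+1) / muF a := by
  simp [LL]

lemma LL_down (b : ℕ) : LL (b+2) b = muF b * (1 - eP b) / muF (b+2) := by
  unfold LL
  rw [if_neg (by omega), if_pos rfl]

lemma LL_00 : LL 0 0 = 1/2 := by
  unfold LL
  rw [if_neg (by omega), if_neg (by omega), if_pos ⟨rfl, rfl⟩]

lemma LL_zero (a b : ℕ) (h1 : b ≠ a+1) (h2 : a ≠ b+2) (h3 : ¬(a = 0 ∧ b = 0)) :
    LL a b = 0 := by
  unfold LL
  rw [if_neg h1, if_neg h2, if_neg h3]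

lemma LL_nonneg (a b : ℕ) : 0 ≤ LL a b := by
  unfold LL
  split_ifs
  · exact le_of_lt (div_pos (mul_pos (muF_pos _) (eP_pos _)) (muF_pos _))
  · exact le_of_lt (div_pos (mul_pos (muF_pos _) (by linarith [eP_lt_one b])) (muF_pos _))
  · norm_num
  · exact le_rfl
lemma LL_up_pos (a : ℕ) : 0 < LL a (a+1) := by
  rw [LL_up]
  exact div_pos (mul_pos (muF_pos _) (eP_pos _)) (muF_pos _)

lemma LL_down_pos (b : ℕ) : 0 < LL (b+2) b := by
  rw [LL_down]
  exact div_pos (mul_pos (muF_pos _) (by linarith [eP_lt_one b])) (muF_pos _)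

/-- finite support sums -/
lemma hasSum_pair {f : ℕ → ℝ} {x y : ℕ} (hxy : x ≠ y)
    (h0 : ∀ b, b ≠ x → b ≠ y → f b = 0) : HasSum f (f x + f y) := by
  have hsub : ∀ b ∉ ({x, y} : Finset ℕ), f b = 0 := by
    intro b hb
    simp only [Finset.mem_insert, Finset.mem_singleton] at hb
    push_neg at hb
    exact h0 b hb.1 hb.2
  simpa [Finset.sum_pair hxy] using hasSum_sum_of_ne_finset_zero hsub

theorem exists_alt_with_several_invariant_measures :
    ∃ (L : ℕ → ℕ → ℝ) (pi pi' : ℕ → ℝ),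
      (∀ i j, 0 ≤ L i j) ∧
      (∀ i, HasSum (fun j => L i j) 1) ∧
      (∀ i j, i + 1 < j → L i j = 0) ∧
      MatIrreducible L ∧
      (∀ a, 0 < pi a) ∧ (∀ a, 0 < pi' a) ∧
      (∀ b, HasSum (fun a => pi a * L a b) (pi b)) ∧
      (∀ b, HasSum (fun a => pi' a * L a b) (pi' b)) ∧
      ¬ ∃ c : ℝ, ∀ a, pi' a = c * pi a := by
  refine ⟨LL, muF, fun a => muF a * hF a, LL_nonneg, ?_, ?_, ?_, muF_pos,
    fun a => mul_pos (muF_pos a) (hF_pos a), ?_, ?_, ?_⟩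
  · -- row sums
    intro i
    match i with
    | 0 =>
      have h := hasSum_pair (f := fun j => LL 0 j) (x := 0) (y := 1) (by omega)
        (by
          intro b hb1 hb2
          exact LL_zero 0 b (by omega) (by omega) (by tauto))
      have hv : LL 0 0 + LL 0 1 = 1 := by
        rw [LL_00, LL_up 0]
        show (1:ℝ)/2 + muF 1 * eP 1 / muF 0 = 1
        norm_num [muF, eP]
      rwa [hv] at h
    | 1 =>
      have h := hasSum_pair (f := fun j => LL 1 j) (x := 2) (y := 0) (by omega)
        (by
          intro b hb1 hb2
          exact LL_zero 1 b (by omega) (by omega) (by omega))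
      have hz : LL 1 0 = 0 := LL_zero 1 0 (by omega) (by omega) (by omega)
      have hv : LL 1 2 + LL 1 0 = 1 := by
        rw [hz, LL_up 1]
        show muF 2 * eP 2 / muF 1 + 0 = 1
        have : muF 2 = ((1 - eP 0) * muF 0 + (1 - eP 1) * muF 1) / eP 2 := rfl
        rw [this]
        show ((1 - eP 0) * muF 0 + (1 - eP 1) * muF 1) / eP (0+2) * eP (0+2) / muF 1 + 0 = 1
        simp only [eP, muF]
        norm_num
      rwa [hv] at h
    | k+2 =>
      have h := hasSum_pair (f := fun j => LL (k+2) j) (x := k+3) (y := k) (by omega)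
        (by
          intro b hb1 hb2
          exact LL_zero (k+2) b (by omega) (by omega) (by omega))
      have hv : LL (k+2) (k+3) + LL (k+2) k = 1 := by
        rw [show k+3 = (k+2)+1 from rfl, LL_up (k+2), LL_down k]
        have c1 := cutEq k
        have c2 := cutEq (k+1)
        have hm := (muF_pos (k+2)).ne'
        rw [← add_div, div_eq_one_iff_eq hm]
        linear_combination c2 - c1
      rwa [hv] at h
  · -- ALT
    intro i j hij
    exact LL_zero i j (by omega) (by omega) (by omega)
  · -- irreducibility
    intro i j
    set c : ℕ := i + j + 2 with hc
    set m : ℕ := j + 2*(i+1) with hm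
    refine ⟨c + (i+1), fun k => if k ≤ c then i + k else m - 2*(k - c), by omega, ?_, ?_, ?_⟩
    · simp
    · have h1 : ¬ (c + (i+1) ≤ c) := by omega
      simp only [if_neg h1]
      omega
    · intro k hk
      by_cases hkc : k < c
      · have h1 : k ≤ c := by omega
        have h2 : k + 1 ≤ c := by omega
        simp only [if_pos h1, if_pos h2]
        have : i + (k+1) = (i+k) + 1 := by omega
        rw [this]
        exact LL_up_pos (i+k)
      · -- descending phase
        have h2 : ¬ (k + 1 ≤ c) := by omega
        have hkn : k < c + (i+1) := hk
        have hb : m - 2*(k+1-c) + 2 = m - 2*(k-c) := by omega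
        by_cases h1 : k ≤ c
        · have hkc2 : k = c := by omega
          simp only [if_pos h1, if_neg h2]
          have e1 : i + k = (m - 2*(k+1-c)) + 2 := by omega
          rw [e1]
          exact LL_down_pos _
        · simp only [if_neg h1, if_neg h2]
          have e1 : m - 2*(k-c) = (m - 2*(k+1-c)) + 2 := by omega
          rw [e1]
          exact LL_down_pos _
  · -- invariance of muF
    intro b
    match b with
    | 0 =>
      have h := hasSum_pair (f := fun a => muF a * LL a 0) (x := 0) (y := 2) (by omega)
        (by
          intro a ha1 ha2
          have : LL a 0 = 0 := LL_zero a 0 (by omega) (by omega) (by tauto)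
          simp [this])
      have hv : muF 0 * LL 0 0 + muF 2 * LL 2 0 = muF 0 := by
        have hmu2 : muF 2 = 299/18 := by
          show ((1 - eP 0) * muF 0 + (1 - eP 1) * muF 1) / eP (0+2) = _
          simp only [muF, eP]
          norm_num
        rw [LL_00, show (2:ℕ) = 0 + 2 from rfl, LL_down 0]
        rw [show ((0:ℕ)+2) = 2 from rfl, hmu2]
        simp only [muF, eP]
        norm_num
      rwa [hv] at h
    | c+1 =>
      have h := hasSum_pair (f := fun a => muF a * LL a (c+1)) (x := c) (y := c+3) (by omega)
        (by
          intro a ha1 ha2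
          have : LL a (c+1) = 0 := LL_zero a (c+1) (by omega) (by omega) (by omega)
          simp [this])
      have hv : muF c * LL c (c+1) + muF (c+3) * LL (c+3) (c+1) = muF (c+1) := by
        rw [LL_up c, show c+3 = (c+1)+2 from rfl, LL_down (c+1)]
        have h1 := (muF_pos c).ne'
        have h2 := (muF_pos (c+3)).ne'
        field_simp
        ring
      rwa [hv] at h
  · -- invariance of muF * hF
    intro b
    match b with
    | 0 =>
      have h := hasSum_pair (f := fun a => muF a * hF a * LL a 0) (x := 0) (y := 2) (by omega)
        (by
          intro a ha1 ha2
          have : LL a 0 = 0 := LL_zero a 0 (by omega) (by omega) (by tauto)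
          simp [this])
      have hv : muF 0 * hF 0 * LL 0 0 + muF 2 * hF 2 * LL 2 0 = muF 0 * hF 0 := by
        have hmu2 : muF 2 = 299/18 := by
          show ((1 - eP 0) * muF 0 + (1 - eP 1) * muF 1) / eP (0+2) = _
          simp only [muF, eP]
          norm_num
        rw [LL_00, show (2:ℕ) = 0 + 2 from rfl, LL_down 0,
          hF_zero, hF_even 2 (by norm_num) (by norm_num)]
        rw [show ((0:ℕ)+2) = 2 from rfl, hmu2]
        simp only [muF, eP]
        norm_num
      rwa [hv] at h
    | c+1 =>
      have h := hasSum_pair (f := fun a => muF a * hF a * LL a (c+1)) (x := c) (y := c+3)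
        (by omega)
        (by
          intro a ha1 ha2
          have : LL a (c+1) = 0 := LL_zero a (c+1) (by omega) (by omega) (by omega)
          simp [this])
      have hv : muF c * hF c * LL c (c+1) + muF (c+3) * hF (c+3) * LL (c+3) (c+1)
          = muF (c+1) * hF (c+1) := by
        rw [LL_up c, show c+3 = (c+1)+2 from rfl, LL_down (c+1)]
        have h1 := (muF_pos c).ne'
        have h2 := (muF_pos (c+3)).ne'
        have hh := harm c
        have t1 : muF c * hF c * (muF (c+1) * eP (c+1) / muF c)
            = muF (c+1) * (eP (c+1) * hF c) := by
          field_simp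
        have t2 : muF (c+3) * hF (c+3) * (muF (c+1) * (1 - eP (c+1)) / muF (c+3))
            = muF (c+1) * ((1 - eP (c+1)) * hF (c+3)) := by
          field_simp
        rw [t1, t2, ← mul_add, hh]
      rwa [hv] at h
  · -- non proportional
    rintro ⟨c, hcp⟩
    have h0 : muF 0 * hF 0 = c * muF 0 := hcp 0
    have h1 : muF 1 * hF 1 = c * muF 1 := hcp 1
    rw [hF_zero] at h0
    rw [hF_odd 1 (by norm_num)] at h1
    simp only [muF] at h0 h1
    norm_num at h0 h1
    rw [← h0] at h1
    norm_num at h1
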